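/- Let p be a prime. For every pair of functions (α, β) with α : ℤ/pℤ → ℤ/pℤ bijective and β : ℤ/pℤ → ℤ/pℤ∖{0}, there are exactly p^p permutations of ℤ/p²ℤ of the form [f]_{p^2} for some f ∈ ℤ[x] with [f]_p = α and [f′]_p = β. -/

import Mathlib

set_option linter.unusedSectionVars false

open Polynomial

private def pr (p : ℕ) : ZMod (p^2) →+* ZMod p := ZMod.castHom (dvd_pow_self p two_ne_zero) (ZMod p)

section Aux
variable {p : ℕ} [Fact p.Prime]

private lemma pr_aeval (f : ℤ[X]) (y : ZMod (p^2)) : pr p (aeval y f) = aeval (pr p y) f :=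
  (Polynomial.aeval_algHom_apply (pr p).toIntAlgHom y f).symm

private lemma pr_natCast (n : ℕ) : pr p (n : ZMod (p^2)) = n := map_natCast _ n

private lemma natCast_val_self {n : ℕ} [NeZero n] (a : ZMod n) : ((a.val : ℕ) : ZMod n) = a := by
  rw [ZMod.natCast_val, ZMod.cast_id]

private lemma pr_eq (z : ZMod (p^2)) : pr p z = ((z.val : ℕ) : ZMod p) := by
  conv_lhs => rw [← natCast_val_self z]
  exact pr_natCast _

private lemma pmul_eq_zero {z : ZMod (p^2)} (h : pr p z = 0) : (p : ZMod (p^2)) * z = 0 := by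
  rw [pr_eq] at h
  obtain ⟨k, hk⟩ := (ZMod.natCast_eq_zero_iff _ _).mp h
  calc (p : ZMod (p^2)) * z = (p : ZMod (p^2)) * ((z.val : ℕ) : ZMod (p^2)) := by
        rw [natCast_val_self]
    _ = ((p * z.val : ℕ) : ZMod (p^2)) := by push_cast; ring
    _ = 0 := by
        rw [hk]; push_cast; rw [← mul_assoc, ← pow_two,
          show ((p : ZMod (p^2)))^2 = 0 by rw [← Nat.cast_pow, ZMod.natCast_self], zero_mul]

private lemma pmul_congr {z w : ZMod (p^2)} (h : pr p z = pr p w) :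
    (p : ZMod (p^2)) * z = (p : ZMod (p^2)) * w := by
  have h0 : pr p (z - w) = 0 := by rw [map_sub, h, sub_self]
  have := pmul_eq_zero h0
  rw [mul_sub] at this
  exact sub_eq_zero.mp this

private lemma taylor (f : ℤ[X]) (y t : ZMod (p^2)) :
    aeval (y + (p : ZMod (p^2)) * t) f
      = aeval y f + (p : ZMod (p^2)) * (t * aeval y (derivative f)) := by
  have hsq : ((p : ZMod (p^2)) * t)^2 = 0 := by
    rw [mul_pow, show ((p : ZMod (p^2)))^2 = 0 by rw [← Nat.cast_pow, ZMod.natCast_self], zero_mul]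
  have hev : ∀ z : ZMod (p^2), aeval z f = (f.map (Int.castRingHom (ZMod (p^2)))).eval z := by
    intro z; rw [aeval_def, algebraMap_int_eq, ← eval_map]
  have hev' : ∀ z : ZMod (p^2), aeval z (derivative f)
      = (f.map (Int.castRingHom (ZMod (p^2)))).derivative.eval z := by
    intro z; rw [derivative_map, aeval_def, algebraMap_int_eq, ← eval_map]
  obtain ⟨k, hk⟩ := (f.map (Int.castRingHom (ZMod (p^2)))).binomExpansion y ((p : ZMod (p^2)) * t)
  rw [hev, hev, hev', hk, hsq]
  ring

private lemma decomp (y : ZMod (p^2)) :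
    ∃ t, y = (((pr p y).val : ℕ) : ZMod (p^2)) + (p : ZMod (p^2)) * t := by
  refine ⟨((y.val / p : ℕ) : ZMod (p^2)), ?_⟩
  rw [pr_eq, ZMod.val_natCast]
  calc y = ((y.val : ℕ) : ZMod (p^2)) := (natCast_val_self y).symm
    _ = ((y.val % p + p * (y.val / p) : ℕ) : ZMod (p^2)) := by rw [Nat.mod_add_div]
    _ = _ := by push_cast; ring

private lemma isUnit_of_pr_ne_zero {d : ZMod (p^2)} (h : pr p d ≠ 0) : IsUnit d := by
  rw [pr_eq, Ne, ZMod.natCast_eq_zero_iff] at h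
  have h2 : Nat.Coprime d.val (p^2) :=
    Nat.Coprime.pow_right _ (Nat.coprime_comm.mp ((Fact.out : p.Prime).coprime_iff_not_dvd.mpr h))
  have := (ZMod.isUnit_iff_coprime d.val (p^2)).mpr h2
  rwa [natCast_val_self] at this

private lemma exists_poly (φ : ZMod p → ZMod p) : ∃ q : ℤ[X], ∀ x, aeval x q = φ x := by
  obtain ⟨q, hq⟩ := Polynomial.map_surjective (Int.castRingHom (ZMod p)) ZMod.intCast_surjective
    (Lagrange.interpolate Finset.univ id φ)
  refine ⟨q, fun x => ?_⟩
  rw [aeval_def, algebraMap_int_eq, ← eval_map, hq]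
  exact Lagrange.eval_interpolate_at_node _ (Set.injOn_id _) (Finset.mem_univ x)

end Aux

private def digitMap (p : ℕ) (g : ZMod (p^2) → ZMod (p^2)) (x : ZMod p) : ZMod p :=
  (((g ((x.val : ℕ) : ZMod (p^2))).val / p : ℕ) : ZMod p)

theorem card_polyPerm_with_reduction_and_derivative (p : ℕ) (hp : p.Prime)
    (α β : ZMod p → ZMod p) (hα : Function.Bijective α) (hβ : ∀ x, β x ≠ 0) :
    Nat.card {g : ZMod (p ^ 2) → ZMod (p ^ 2) //
        Function.Bijective g ∧
        ∃ f : Polynomial ℤ,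
          (g = fun x => Polynomial.aeval x f) ∧
          (∀ x : ZMod p, Polynomial.aeval x f = α x) ∧
          (∀ x : ZMod p, Polynomial.aeval x (Polynomial.derivative f) = β x)} =
      p ^ p := by
  haveI := Fact.mk hp
  have hp0 : 0 < p := hp.pos
  classical
  set L : ZMod p → ZMod (p ^ 2) := fun x => ((x.val : ℕ) : ZMod (p ^ 2)) with hLdef
  have hπL : ∀ x : ZMod p, pr p (L x) = x := by
    intro x; rw [hLdef]; exact (pr_natCast _).trans (natCast_val_self x)
  have hdivlt : ∀ z : ZMod (p^2), z.val / p < p := by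
    intro z
    exact Nat.div_lt_of_lt_mul (lt_of_lt_of_eq z.val_lt (pow_two p))
  -- injectivity of the digit map on the set
  have Dinj : ∀ (f₁ f₂ : Polynomial ℤ),
      (∀ x : ZMod p, aeval x f₁ = α x) → (∀ x : ZMod p, aeval x f₂ = α x) →
      (∀ x : ZMod p, aeval x (derivative f₁) = β x) →
      (∀ x : ZMod p, aeval x (derivative f₂) = β x) →
      digitMap p (fun y => aeval y f₁) = digitMap p (fun y => aeval y f₂) →
      (fun y : ZMod (p^2) => aeval y f₁) = (fun y => aeval y f₂) := by
    intro f₁ f₂ hf₁ hf₂ hf₁' hf₂' h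
    have hL1 : ∀ x : ZMod p, aeval (L x) f₁ = aeval (L x) f₂ := by
      intro x
      have t1 : ((aeval (L x) f₁).val : ZMod p) = α x := by
        rw [← pr_eq, pr_aeval, hπL, hf₁]
      have t2 : ((aeval (L x) f₂).val : ZMod p) = α x := by
        rw [← pr_eq, pr_aeval, hπL, hf₂]
      have e1 : (aeval (L x) f₁).val % p = (aeval (L x) f₂).val % p := by
        have := congrArg ZMod.val (t1.trans t2.symm)
        rwa [ZMod.val_natCast, ZMod.val_natCast] at this
      have e2 : (aeval (L x) f₁).val / p = (aeval (L x) f₂).val / p := by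
        have hc := congrArg (fun φ => φ x) h
        simp only [digitMap] at hc
        have := congrArg ZMod.val hc
        rwa [ZMod.val_natCast, ZMod.val_natCast, Nat.mod_eq_of_lt (hdivlt _),
          Nat.mod_eq_of_lt (hdivlt _)] at this
      have e3 : (aeval (L x) f₁).val = (aeval (L x) f₂).val := by
        rw [← Nat.div_add_mod (aeval (L x) f₁).val p, ← Nat.div_add_mod (aeval (L x) f₂).val p,
          e1, e2]
      calc aeval (L x) f₁ = (((aeval (L x) f₁).val : ℕ) : ZMod (p^2)) := (natCast_val_self _).symm
        _ = (((aeval (L x) f₂).val : ℕ) : ZMod (p^2)) := by rw [e3]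
        _ = aeval (L x) f₂ := natCast_val_self _
    funext y
    obtain ⟨t, hyt⟩ := decomp (p := p) y
    have hd : (p : ZMod (p^2)) * (t * aeval (L (pr p y)) (derivative f₁))
        = (p : ZMod (p^2)) * (t * aeval (L (pr p y)) (derivative f₂)) := by
      apply pmul_congr
      rw [map_mul, map_mul, pr_aeval, pr_aeval, hπL, hf₁', hf₂']
    calc aeval y f₁ = aeval (L (pr p y) + (p : ZMod (p^2)) * t) f₁ := by rw [← hyt]
      _ = aeval (L (pr p y)) f₁ + (p:ZMod (p^2)) * (t * aeval (L (pr p y)) (derivative f₁)) :=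
          taylor f₁ _ t
      _ = aeval (L (pr p y)) f₂ + (p:ZMod (p^2)) * (t * aeval (L (pr p y)) (derivative f₂)) := by
          rw [hL1, hd]
      _ = aeval (L (pr p y) + (p : ZMod (p^2)) * t) f₂ := (taylor f₂ _ t).symm
      _ = aeval y f₂ := by rw [← hyt]
  -- surjectivity construction
  have Dsurj : ∀ c : ZMod p → ZMod p, ∃ f : Polynomial ℤ,
      (∀ x : ZMod p, aeval x f = α x) ∧
      (∀ x : ZMod p, aeval x (derivative f) = β x) ∧
      (∀ x : ZMod p, aeval (L x) f = (((α x).val + p * (c x).val : ℕ) : ZMod (p^2))) := by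
    intro c
    obtain ⟨a, ha⟩ := exists_poly (p := p) α
    obtain ⟨u, hu⟩ := exists_poly (p := p) (fun x => aeval x (derivative a) - β x)
    set f₀ : Polynomial ℤ := a + (X ^ p - X) * u with hf₀def
    have h₀ : ∀ x : ZMod p, aeval x f₀ = α x := by
      intro x
      rw [hf₀def]
      simp [ZMod.pow_card, ha]
    have h₀' : ∀ x : ZMod p, aeval x (derivative f₀) = β x := by
      intro x
      have hder : derivative f₀
          = derivative a + ((C (p:ℤ)) * X^(p-1) - 1) * u + (X^p - X) * derivative u := by
        rw [hf₀def]
        simp [derivative_mul, derivative_X_pow]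
        ring
      rw [hder]
      simp [ZMod.pow_card, ZMod.natCast_self, hu]
    set T : ZMod p → ZMod (p^2) := fun x => (((α x).val + p * (c x).val : ℕ) : ZMod (p^2)) with hT
    have hπT : ∀ x, pr p (T x) = α x := by
      intro x
      rw [hT]
      simp only
      rw [pr_natCast]
      push_cast [ZMod.natCast_self]
      simp [natCast_val_self]
    set Δ : ZMod p → ZMod (p^2) := fun x => T x - aeval (L x) f₀ with hΔ
    have hπΔ : ∀ x, pr p (Δ x) = 0 := by
      intro x
      rw [hΔ]
      simp only
      rw [map_sub, hπT, pr_aeval, hπL, h₀, sub_self]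
    have hdvd : ∀ x, p ∣ (Δ x).val := by
      intro x
      have := hπΔ x
      rwa [pr_eq, ZMod.natCast_eq_zero_iff] at this
    obtain ⟨e, he⟩ := exists_poly (p := p) (fun x => (((Δ x).val / p : ℕ) : ZMod p))
    refine ⟨f₀ + C (p : ℤ) * e, ?_, ?_, ?_⟩
    · intro x
      simp [h₀, ZMod.natCast_self]
    · intro x
      simp [h₀', ZMod.natCast_self]
    · intro x
      rw [map_add, map_mul, aeval_C]
      have e2 : (p : ZMod (p^2)) * (aeval (L x) e)
          = (p : ZMod (p^2)) * ((((Δ x).val / p : ℕ)) : ZMod (p^2)) := by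
        apply pmul_congr
        rw [pr_aeval, hπL, he, pr_natCast]
      have e3 : (p : ZMod (p^2)) * ((((Δ x).val / p : ℕ)) : ZMod (p^2))
          = (((Δ x).val : ℕ) : ZMod (p^2)) := by
        rw [← Nat.cast_mul, Nat.mul_div_cancel' (hdvd x)]
      have e4 : (((Δ x).val : ℕ) : ZMod (p^2)) = Δ x := natCast_val_self _
      have e5 : (algebraMap ℤ (ZMod (p^2))) (p : ℤ) = (p : ZMod (p^2)) := by
        simp
      rw [e5, e2, e3, e4, hΔ]
      simp only
      rw [hT]
      ring
  -- bijectivity of any candidate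
  have gbij : ∀ f : Polynomial ℤ, (∀ x : ZMod p, aeval x f = α x) →
      (∀ x : ZMod p, aeval x (derivative f) = β x) →
      Function.Bijective (fun y : ZMod (p^2) => aeval y f) := by
    intro f h₁ h₁'
    rw [← Finite.injective_iff_bijective]
    intro y₁ y₂ hy
    simp only at hy
    have hπg : ∀ y : ZMod (p^2), pr p (aeval y f) = α (pr p y) := by
      intro y; rw [pr_aeval, h₁]
    have hxx : pr p y₁ = pr p y₂ := hα.injective (by rw [← hπg, ← hπg, hy])
    obtain ⟨t₁, ht₁⟩ := decomp (p := p) y₁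
    obtain ⟨t₂, ht₂⟩ := decomp (p := p) y₂
    set w : ZMod (p^2) := (((pr p y₂).val : ℕ) : ZMod (p^2)) with hw
    have k₁ : aeval y₁ f = aeval w f + (p : ZMod (p^2)) * (t₁ * aeval w (derivative f)) := by
      conv_lhs => rw [ht₁]
      rw [hxx]
      exact taylor f _ t₁
    have k₂ : aeval y₂ f = aeval w f + (p : ZMod (p^2)) * (t₂ * aeval w (derivative f)) := by
      conv_lhs => rw [ht₂]
      exact taylor f _ t₂
    have hcancel : (p : ZMod (p^2)) * (t₁ * aeval w (derivative f))
        = (p : ZMod (p^2)) * (t₂ * aeval w (derivative f)) := by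
      have := hy
      rw [k₁, k₂] at this
      exact add_left_cancel this
    have hd : IsUnit (aeval w (derivative f)) := by
      apply isUnit_of_pr_ne_zero
      rw [hw, pr_aeval, pr_natCast, natCast_val_self, h₁']
      exact hβ _
    have ht : (p : ZMod (p^2)) * t₁ = (p : ZMod (p^2)) * t₂ := by
      apply hd.mul_right_cancel
      rw [mul_assoc, mul_assoc]
      exact hcancel
    rw [ht₁, ht₂, hxx, ht]
  -- assemble the bijection with digit functions
  have hbij : Function.Bijective
      (fun g : {g : ZMod (p ^ 2) → ZMod (p ^ 2) //
        Function.Bijective g ∧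
        ∃ f : Polynomial ℤ,
          (g = fun x => Polynomial.aeval x f) ∧
          (∀ x : ZMod p, Polynomial.aeval x f = α x) ∧
          (∀ x : ZMod p, Polynomial.aeval x (Polynomial.derivative f) = β x)} =>
        digitMap p g.1) := by
    constructor
    · rintro ⟨g₁, hb₁, f₁, rfl, hf₁, hf₁'⟩ ⟨g₂, hb₂, f₂, rfl, hf₂, hf₂'⟩ h
      simp only [Subtype.mk.injEq]
      exact Dinj f₁ f₂ hf₁ hf₂ hf₁' hf₂' h
    · intro c
      obtain ⟨f, h₁, h₁', hkey⟩ := Dsurj c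
      refine ⟨⟨fun y => aeval y f, gbij f h₁ h₁', f, rfl, h₁, h₁'⟩, ?_⟩
      funext x
      have hlt : (α x).val + p * (c x).val < p ^ 2 := by
        have h1 := ZMod.val_lt (α x)
        have h2 := ZMod.val_lt (c x)
        have h3 : p * (c x).val + p ≤ p * p := by nlinarith
        have h4 : p ^ 2 = p * p := pow_two p
        omega
      show (((aeval (L x) f).val / p : ℕ) : ZMod p) = c x
      rw [hkey x, ZMod.val_natCast, Nat.mod_eq_of_lt hlt, Nat.add_mul_div_left _ _ hp0,
        Nat.div_eq_of_lt (ZMod.val_lt (α x)), zero_add, natCast_val_self]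
  rw [Nat.card_eq_of_bijective _ hbij, Nat.card_fun, Nat.card_zmod]
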